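/- Let p ≥ 5 be a prime and G = ⟨s, t | t^p = s^{p-1} = 1, s⁻¹ t s = t^k⟩ with k a primitive root mod p. For every 0 ≤ x ≤ p−2 with x ≠ 0 or considering x with s^x ≠ 1, the set s^x⟨t⟩ (the full coset of T = ⟨t⟩) is a single conjugacy class of G, and the nonidentity elements of ⟨t⟩ form a single conjugacy class. -/

import Mathlib

open scoped Pointwise

/-- Relations for the presentation `⟨s, t | t^p = s^(p-1) = 1, s⁻¹ t s = t^k⟩`,
with `s = of 0` and `t = of 1`. -/
def affineRels (p k : ℕ) : Set (FreeGroup (Fin 2)) :=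
  {FreeGroup.of 1 ^ p, FreeGroup.of 0 ^ (p - 1),
    (FreeGroup.of 0)⁻¹ * FreeGroup.of 1 * FreeGroup.of 0 * (FreeGroup.of 1 ^ k)⁻¹}

namespace AffineConjAux

variable {p k : ℕ}

abbrev GA (p k : ℕ) := PresentedGroup (affineRels p k)
abbrev sA (p k : ℕ) : GA p k := PresentedGroup.of 0
abbrev tA (p k : ℕ) : GA p k := PresentedGroup.of 1

lemma rel_one {r : FreeGroup (Fin 2)} (hr : r ∈ affineRels p k) :
    PresentedGroup.mk (affineRels p k) r = 1 :=
  (QuotientGroup.eq_one_iff _).mpr (Subgroup.subset_normalClosure hr)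

lemma t_pow_p : tA p k ^ p = 1 := by
  have h := rel_one (p := p) (k := k) (Set.mem_insert _ _)
  simp at h; exact h

lemma s_pow : sA p k ^ (p - 1) = 1 := by
  have h := rel_one (p := p) (k := k)
    (Set.mem_insert_of_mem _ (Set.mem_insert _ _))
  simp at h; exact h

lemma conj_rel : (sA p k)⁻¹ * tA p k * sA p k = tA p k ^ k := by
  have h := rel_one (p := p) (k := k)
    (Set.mem_insert_of_mem _ (Set.mem_insert_of_mem _ rfl))
  simp only [map_mul, map_inv, map_pow] at h
  have := mul_eq_one_iff_eq_inv.mp h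
  simp [mul_assoc] at this; exact this

lemma t_zpow_congr {m n : ℤ} (h : (m : ZMod p) = n) : tA p k ^ m = tA p k ^ n := by
  have h0 : ((m - n : ℤ) : ZMod p) = 0 := by push_cast [h]; ring
  obtain ⟨q, hq⟩ := (ZMod.intCast_zmod_eq_zero_iff_dvd _ _).mp h0
  have hp1 : tA p k ^ (p : ℤ) = 1 := by rw [zpow_natCast, t_pow_p]
  have : tA p k ^ (m - n) = 1 := by
    rw [hq, zpow_mul, hp1, one_zpow]
  calc tA p k ^ m = tA p k ^ (n + (m - n)) := by ring_nf
    _ = tA p k ^ n * tA p k ^ (m - n) := zpow_add _ _ _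
    _ = tA p k ^ n := by rw [this, mul_one]

lemma conj_t_zpow (m : ℤ) :
    (sA p k)⁻¹ * tA p k ^ m * sA p k = tA p k ^ ((k : ℤ) * m) := by
  have h2 := conj_zpow (i := m) (a := (sA p k)⁻¹) (b := tA p k)
  rw [inv_inv] at h2
  rw [← h2, conj_rel, ← zpow_natCast, ← zpow_mul]

lemma conj_t_zpow_pow (j : ℕ) (m : ℤ) :
    (sA p k ^ j)⁻¹ * tA p k ^ m * sA p k ^ j = tA p k ^ ((k : ℤ) ^ j * m) := by
  induction j generalizing m with
  | zero => simp
  | succ n ih =>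
      have : sA p k ^ (n + 1) = sA p k ^ n * sA p k := by rw [pow_succ]
      rw [this, mul_inv_rev]
      have h1 : (sA p k)⁻¹ * ((sA p k ^ n)⁻¹ * tA p k ^ m * sA p k ^ n) * sA p k
          = tA p k ^ ((k : ℤ) * ((k : ℤ) ^ n * m)) := by
        rw [ih m, conj_t_zpow]
      calc (sA p k)⁻¹ * (sA p k ^ n)⁻¹ * tA p k ^ m * (sA p k ^ n * sA p k)
          = (sA p k)⁻¹ * ((sA p k ^ n)⁻¹ * tA p k ^ m * sA p k ^ n) * sA p k := by
            group
        _ = tA p k ^ ((k : ℤ) * ((k : ℤ) ^ n * m)) := h1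
        _ = tA p k ^ ((k : ℤ) ^ (n + 1) * m) := by ring_nf

section WithHyp

variable (hp : p.Prime) (hp5 : 5 ≤ p) (hk : orderOf (k : ZMod p) = p - 1)
include hp hp5 hk

lemma k_ne_zero : (k : ZMod p) ≠ 0 := by
  haveI : Fact p.Prime := ⟨hp⟩
  intro h
  have h1 : (k : ZMod p) ^ (p - 1) = 1 := by rw [← hk]; exact pow_orderOf_eq_one _
  rw [h, zero_pow (by omega)] at h1
  exact zero_ne_one h1

/-- conjugation by `s` in the positive direction -/
lemma conj_t_zpow_inv (m : ℤ) :
    sA p k * tA p k ^ m * (sA p k)⁻¹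
      = tA p k ^ ((((k : ZMod p)⁻¹).val : ℤ) * m) := by
  haveI : Fact p.Prime := ⟨hp⟩
  haveI : NeZero p := ⟨hp.pos.ne'⟩
  have h := conj_t_zpow (p := p) (k := k) ((((k : ZMod p)⁻¹).val : ℤ) * m)
  have harith : (((k : ℤ) * ((((k : ZMod p)⁻¹).val : ℤ) * m) : ℤ) : ZMod p) = (m : ZMod p) := by
    push_cast
    rw [ZMod.natCast_val, ZMod.cast_id]
    field_simp [k_ne_zero hp hp5 hk]
  rw [t_zpow_congr harith] at h
  have := congrArg (fun g => sA p k * g * (sA p k)⁻¹) h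
  simpa [mul_assoc] using this.symm

lemma T_normal : (Subgroup.zpowers (tA p k)).Normal := by
  rw [← Subgroup.normalizer_eq_top_iff]
  rw [eq_top_iff]
  intro g _
  refine PresentedGroup.generated_by _ _ ?_ g
  intro j
  fin_cases j
  · -- s ∈ normalizer
    rw [Subgroup.mem_normalizer_iff]
    intro h
    constructor
    · intro hh
      obtain ⟨m, rfl⟩ := Subgroup.mem_zpowers_iff.mp hh
      exact Subgroup.mem_zpowers_iff.mpr
        ⟨(((k : ZMod p)⁻¹).val : ℤ) * m, (conj_t_zpow_inv hp hp5 hk m).symm⟩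
    · intro hmem
      obtain ⟨m, hm⟩ := Subgroup.mem_zpowers_iff.mp hmem
      have hm' : tA p k ^ m = sA p k * h * (sA p k)⁻¹ := hm
      have hh : h = (sA p k)⁻¹ * tA p k ^ m * sA p k := by rw [hm']; group
      rw [hh, conj_t_zpow]
      exact Subgroup.mem_zpowers_iff.mpr ⟨(k : ℤ) * m, rfl⟩
  · -- t ∈ normalizer
    exact Subgroup.le_normalizer (Subgroup.mem_zpowers _)

omit hp hp5 hk in
lemma units_mulLeft_pow {M : Type*} [Monoid M] (u : Mˣ) (n : ℕ) :
    (Units.mulLeft u) ^ n = Units.mulLeft (u ^ n) := by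
  induction n with
  | zero => ext x; simp
  | succ n ih => ext x; simp [pow_succ, ih, mul_assoc]

lemma t_ne_one : tA p k ≠ 1 := by
  haveI : Fact p.Prime := ⟨hp⟩
  have hk0 : (k : ZMod p) ≠ 0 := k_ne_zero hp hp5 hk
  have hu0 : ((k : ZMod p)⁻¹) ≠ 0 := inv_ne_zero hk0
  set f : Fin 2 → Equiv.Perm (ZMod p) :=
    ![Equiv.mulLeft₀ ((k : ZMod p)⁻¹) hu0, Equiv.addLeft 1] with hf
  have hkpow : (k : ZMod p) ^ (p - 1) = 1 := by
    rw [← hk]; exact pow_orderOf_eq_one _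
  have hrels : ∀ r ∈ affineRels p k, FreeGroup.lift f r = 1 := by
    intro r hr
    simp only [affineRels, Set.mem_insert_iff, Set.mem_singleton_iff] at hr
    rcases hr with rfl | rfl | rfl
    · rw [map_pow, FreeGroup.lift_apply_of]
      show (Equiv.addLeft (1 : ZMod p)) ^ p = 1
      rw [Equiv.nsmul_addLeft]
      simp
    · rw [map_pow, FreeGroup.lift_apply_of]
      show (Equiv.mulLeft₀ ((k : ZMod p)⁻¹) hu0) ^ (p - 1) = 1
      show (Units.mulLeft (Units.mk0 _ hu0)) ^ (p - 1) = 1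
      rw [units_mulLeft_pow]
      have hv : ((k : ZMod p)⁻¹) ^ (p - 1) = 1 := by
        rw [inv_pow, hkpow, inv_one]
      have : (Units.mk0 ((k : ZMod p)⁻¹) hu0) ^ (p - 1) = 1 := by
        ext
        simpa using hv
      rw [this]
      ext x; simp
    · simp only [map_mul, map_inv, map_pow, FreeGroup.lift_apply_of]
      show (Equiv.mulLeft₀ _ hu0)⁻¹ * Equiv.addLeft 1 * Equiv.mulLeft₀ _ hu0 *
        ((Equiv.addLeft (1 : ZMod p)) ^ k)⁻¹ = 1
      have key : Equiv.addLeft (1 : ZMod p) * Equiv.mulLeft₀ _ hu0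
          = Equiv.mulLeft₀ _ hu0 * (Equiv.addLeft (1 : ZMod p)) ^ k := by
        rw [Equiv.nsmul_addLeft]
        ext x
        show 1 + (k : ZMod p)⁻¹ * x = (k : ZMod p)⁻¹ * (k • (1 : ZMod p) + x)
        rw [nsmul_eq_mul, mul_one, mul_add, inv_mul_cancel₀ hk0]
      calc (Equiv.mulLeft₀ _ hu0)⁻¹ * Equiv.addLeft 1 * Equiv.mulLeft₀ _ hu0 *
            ((Equiv.addLeft (1 : ZMod p)) ^ k)⁻¹
          = (Equiv.mulLeft₀ _ hu0)⁻¹ * (Equiv.addLeft 1 * Equiv.mulLeft₀ _ hu0) *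
            ((Equiv.addLeft (1 : ZMod p)) ^ k)⁻¹ := by group
        _ = (Equiv.mulLeft₀ _ hu0)⁻¹ * (Equiv.mulLeft₀ _ hu0 *
            (Equiv.addLeft (1 : ZMod p)) ^ k) * ((Equiv.addLeft (1 : ZMod p)) ^ k)⁻¹ := by
            rw [key]
        _ = 1 := by group
  intro ht
  have := congrArg (PresentedGroup.toGroup hrels) ht
  rw [map_one] at this
  have h1 : (PresentedGroup.toGroup hrels) (tA p k) = Equiv.addLeft (1 : ZMod p) := by
    show (PresentedGroup.toGroup hrels) (PresentedGroup.of 1) = _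
    rw [PresentedGroup.toGroup.of]
    rfl
  rw [h1] at this
  have h2 : (1 : ZMod p) = 0 := by simpa using Equiv.ext_iff.mp this 0
  exact one_ne_zero h2

lemma conj_mem_coset (x : ℕ) (g : GA p k) :
    g * sA p k ^ x * g⁻¹ ∈ (sA p k ^ x) • ((Subgroup.zpowers (tA p k) : Subgroup (GA p k)) : Set (GA p k)) := by
  haveI hN := T_normal hp hp5 hk
  set π := QuotientGroup.mk' (Subgroup.zpowers (tA p k)) with hπ
  have hπt : π (tA p k) = 1 := (QuotientGroup.eq_one_iff _).mpr (Subgroup.mem_zpowers _)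
  have hmem : ∀ g : GA p k, π g ∈ Subgroup.zpowers (π (sA p k)) := by
    intro g
    refine PresentedGroup.generated_by _ ((Subgroup.zpowers (π (sA p k))).comap π) ?_ g
    intro j
    fin_cases j
    · exact Subgroup.mem_zpowers _
    · have : π (tA p k) ∈ Subgroup.zpowers (π (sA p k)) := by
        rw [hπt]; exact one_mem _
      exact this
  obtain ⟨a, ha⟩ := Subgroup.mem_zpowers_iff.mp (hmem g)
  have hπeq : π (sA p k ^ x) = π (g * sA p k ^ x * g⁻¹) := by
    rw [map_mul, map_mul, map_inv, ← ha, map_pow]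
    group
  obtain ⟨z, hz, hzeq⟩ := (QuotientGroup.mk'_eq_mk' (Subgroup.zpowers (tA p k))).mp hπeq
  exact Set.mem_smul_set.mpr ⟨z, hz, by rw [smul_eq_mul, hzeq]⟩

end WithHyp

end AffineConjAux

theorem conjClasses_of_affine {p k : ℕ} (hp : p.Prime) (hp5 : 5 ≤ p)
    (hk : orderOf (k : ZMod p) = p - 1) :
    letI G := PresentedGroup (affineRels p k)
    letI s : G := PresentedGroup.of 0
    letI t : G := PresentedGroup.of 1
    (∀ x : ℕ, x ≤ p - 2 → s ^ x ≠ 1 →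
        (s ^ x) • ((Subgroup.zpowers t : Subgroup G) : Set G) = {y | IsConj (s ^ x) y}) ∧
      ((Subgroup.zpowers t : Subgroup G) : Set G) \ {1} = {y | IsConj t y} := by
  haveI : Fact p.Prime := ⟨hp⟩
  haveI : NeZero p := ⟨hp.pos.ne'⟩
  haveI hN := AffineConjAux.T_normal (p := p) (k := k) hp hp5 hk
  set G := PresentedGroup (affineRels p k)
  set s : G := PresentedGroup.of 0 with hs
  set t : G := PresentedGroup.of 1 with ht
  have hk0 : (k : ZMod p) ≠ 0 := AffineConjAux.k_ne_zero hp hp5 hk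
  constructor
  · intro x hx hsx
    have hx0 : x ≠ 0 := by rintro rfl; exact hsx (pow_zero s)
    have hkx1 : (k : ZMod p) ^ x ≠ 1 := by
      refine pow_ne_one_of_lt_orderOf hx0 ?_
      rw [hk]; omega
    have hkx1' : (k : ZMod p) ^ x - 1 ≠ 0 := sub_ne_zero_of_ne hkx1
    ext y
    constructor
    · intro hy
      obtain ⟨w, hw, rfl⟩ := Set.mem_smul_set.mp hy
      obtain ⟨m, rfl⟩ := Subgroup.mem_zpowers_iff.mp hw
      rw [smul_eq_mul]
      set c : ZMod p := (m : ZMod p) * ((k : ZMod p) ^ x - 1)⁻¹ with hc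
      set b : ℤ := (c.val : ℤ) with hb
      rw [Set.mem_setOf_eq, isConj_iff]
      refine ⟨t ^ b, ?_⟩
      have hconj : (s ^ x)⁻¹ * t ^ b * s ^ x = t ^ ((k : ℤ) ^ x * b) :=
        AffineConjAux.conj_t_zpow_pow x b
      have hstep : t ^ b * s ^ x * (t ^ b)⁻¹
          = s ^ x * (((s ^ x)⁻¹ * t ^ b * s ^ x) * (t ^ b)⁻¹) := by group
      rw [hstep, hconj, ← zpow_neg, ← zpow_add]
      congr 1
      have hbz : ((b : ℤ) : ZMod p) = c := by
        rw [hb]; push_cast; rw [ZMod.natCast_val, ZMod.cast_id]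
      have : (((k : ℤ) ^ x * b + -b : ℤ) : ZMod p) = ((m : ℤ) : ZMod p) := by
        push_cast
        rw [hbz, hc]
        field_simp
        ring
      exact AffineConjAux.t_zpow_congr this
    · intro hy
      obtain ⟨g, hg⟩ := isConj_iff.mp hy
      rw [← hg]
      exact AffineConjAux.conj_mem_coset hp hp5 hk x g
  · ext y
    constructor
    · rintro ⟨hyT, hy1⟩
      obtain ⟨m, rfl⟩ := Subgroup.mem_zpowers_iff.mp hyT
      have hm0 : ((m : ℤ) : ZMod p) ≠ 0 := by
        intro h0
        apply hy1
        have : t ^ m = t ^ (0 : ℤ) := AffineConjAux.t_zpow_congr (by simpa using h0)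
        simpa using this
      set u : (ZMod p)ˣ := Units.mk0 (k : ZMod p) hk0 with hu
      set a : (ZMod p)ˣ := Units.mk0 ((m : ℤ) : ZMod p) hm0 with ha
      have hou : orderOf u = p - 1 := by
        rw [← orderOf_units]; simpa [hu] using hk
      have htop : Subgroup.zpowers u = ⊤ := by
        apply Subgroup.eq_top_of_card_eq
        rw [Nat.card_zpowers, hou, Nat.card_eq_fintype_card, ZMod.card_units_eq_totient,
          Nat.totient_prime hp]
      have hmem : a ∈ Subgroup.zpowers u := htop ▸ Subgroup.mem_top a
      obtain ⟨j, hj⟩ := Submonoid.mem_powers_iff a _ |>.mp (mem_powers_iff_mem_zpowers.mpr hmem)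
      have hval : ((k : ℤ) ^ j * 1 : ZMod p) = ((m : ℤ) : ZMod p) := by
        have := congrArg (Units.val) hj
        push_cast at this ⊢
        simpa [hu, ha] using this
      rw [Set.mem_setOf_eq, isConj_iff]
      refine ⟨(s ^ j)⁻¹, ?_⟩
      have h1 : (s ^ j)⁻¹ * t ^ (1 : ℤ) * s ^ j = t ^ ((k : ℤ) ^ j * 1) :=
        AffineConjAux.conj_t_zpow_pow j 1
      rw [zpow_one] at h1
      rw [inv_inv, h1]
      exact (AffineConjAux.t_zpow_congr (by exact_mod_cast hval))
    · intro hy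
      obtain ⟨g, hg⟩ := isConj_iff.mp hy
      constructor
      · rw [← hg]
        exact hN.conj_mem t (Subgroup.mem_zpowers _) g
      · intro h1
        apply AffineConjAux.t_ne_one hp hp5 hk
        have : g * t * g⁻¹ = 1 := by rw [hg]; exact h1
        exact (conj_eq_one_iff).mp this
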